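/- Simplicial-to-cubical change of variables: For n ≥ 1, the map φ : (0,1)^n → ℝ^n defined by φ(x_1,…,x_n) = (t_1,…,t_n) with t_i = x_1 x_2 ⋯ x_{n−i+1} is a bijection from the open cube (0,1)^n onto the open simplex Δ_n = {0 < t_1 < … < t_n < 1}, its Jacobian determinant at x equals (up to sign) Π_{j=1}^{n−1} x_j^{n−j} ≠ 0, and for every tuple k = (k_1,…,k_p) of positive integers with k_1 ≥ 2 and k_1+…+k_p = n, the pullback of the simplex integrand satisfies H_{w(k)}(φ(x)) · Π_{j=1}^{n−1} x_j^{n−j} = f_k(x_1,…,x_n) for all x ∈ (0,1)^n. -/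

import Mathlib

open MeasureTheory

/-- The open unit cube `(0,1)^n`. -/
def cube (n : ℕ) : Set (Fin n → ℝ) := {x | ∀ i, x i ∈ Set.Ioo (0 : ℝ) 1}

/-- The open simplex `Δ_n = {0 < t₁ < … < t_n < 1}`. -/
def simplex (n : ℕ) : Set (Fin n → ℝ) :=
  {t | StrictMono t ∧ ∀ i, t i ∈ Set.Ioo (0 : ℝ) 1}

/-- Extension of a vector of `ℝ^n` to a function `ℕ → ℝ` (by `0`). -/
def extFin {n : ℕ} (x : Fin n → ℝ) : ℕ → ℝ :=
  fun j => if h : j < n then x ⟨j, h⟩ else 0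

/-- The simplicial-to-cubical change of variables `t_i = x₁ x₂ ⋯ x_{n−i+1}`
(with indices starting at `0`: `φ(x)_i = x₀ ⋯ x_{n−i−1}`). -/
def phi (n : ℕ) (x : Fin n → ℝ) : Fin n → ℝ :=
  fun i => ∏ j ∈ Finset.range (n - (i : ℕ)), extFin x j

/-- The word `w(k) = (1, 0^{k_p−1}, 1, 0^{k_{p−1}−1}, …, 1, 0^{k_1−1})` in `{0,1}`
(`true` standing for `1` and `false` for `0`) attached to the tuple `k = (k₁,…,k_p)`. -/
def word (k : List ℕ) : List Bool :=
  (k.reverse.map (fun a => true :: List.replicate (a - 1) false)).flatten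

/-- `h 1 t = 1/(1−t)` and `h 0 t = 1/t`. -/
noncomputable def h (b : Bool) (t : ℝ) : ℝ := if b then 1 / (1 - t) else 1 / t

/-- The simplex integrand `H_w(t) = ∏ᵢ h_{wᵢ}(tᵢ)` of a word `w`, the variables being
indexed by the natural numbers. -/
noncomputable def Hw (w : List Bool) (t : ℕ → ℝ) : ℝ :=
  ∏ i ∈ Finset.range w.length, h (w.getD i true) (t i)

/-- The cubical integrand
`f_k(x₁,…,x_n) = ∏_{i=1}^p (x₁⋯x_{K_{i−1}})/(1 − x₁⋯x_{K_i})`, where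
`K_i = k₁ + … + k_i` (indices of the variables starting at `0`). -/
noncomputable def fk (k : List ℕ) (x : ℕ → ℝ) : ℝ :=
  ∏ i ∈ Finset.range k.length,
    (∏ j ∈ Finset.range ((k.take i).sum), x j) /
      (1 - ∏ j ∈ Finset.range ((k.take (i + 1)).sum), x j)


-- counting lemma
lemma prodP_eq_pow (f : ℕ → ℝ) : ∀ n : ℕ,
    ∏ s ∈ Finset.range n, ∏ j ∈ Finset.range s, f j
      = ∏ j ∈ Finset.range (n - 1), f j ^ (n - 1 - j) := by
  intro n
  induction n with
  | zero => simp
  | succ n ih =>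
    rw [Finset.prod_range_succ, ih]
    rcases Nat.eq_zero_or_pos n with rfl | hn
    · simp
    have h1 : n + 1 - 1 = n := rfl
    rw [h1]
    have h2 : ∏ j ∈ Finset.range n, f j ^ (n - j)
        = ∏ j ∈ Finset.range n, (f j ^ (n - 1 - j) * f j) := by
      refine Finset.prod_congr rfl fun j hj => ?_
      rw [Finset.mem_range] at hj
      rw [← pow_succ]
      congr 1
      omega
    rw [h2, Finset.prod_mul_distrib]
    congr 1
    rw [show n = (n - 1) + 1 by omega, Finset.prod_range_succ]
    simp [show n - 1 + 1 = n by omega]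

lemma extFin_lt {n : ℕ} (x : Fin n → ℝ) {j : ℕ} (h : j < n) : extFin x j = x ⟨j, h⟩ :=
  dif_pos h

lemma filter_prod_eq {n : ℕ} (x : Fin n → ℝ) {c : ℕ} (hc : c ≤ n) :
    ∏ j ∈ Finset.univ.filter (fun j : Fin n => (j : ℕ) < c), x j
      = ∏ j ∈ Finset.range c, extFin x j := by
  have h1 : Finset.range c = (Finset.range n).filter (fun j => j < c) := by
    ext j; simp; omega
  rw [h1, Finset.prod_filter, Finset.prod_filter,
    ← Fin.prod_univ_eq_prod_range (fun j => if j < c then extFin x j else 1) n]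
  refine Finset.prod_congr rfl fun j _ => ?_
  by_cases hj : (j : ℕ) < c
  · simp [hj, extFin_lt x j.isLt]
  · simp [hj]

lemma word_nil : word [] = [] := rfl

lemma word_append (k : List ℕ) (a : ℕ) :
    word (k ++ [a]) = (true :: List.replicate (a - 1) false) ++ word k := by
  simp [word]

lemma word_length (k : List ℕ) (hk : ∀ a ∈ k, 0 < a) : (word k).length = k.sum := by
  induction k using List.reverseRecOn with
  | nil => rfl
  | append_singleton k a ih =>
    rw [word_append, List.length_append, ih (fun b hb => hk b (by simp [hb]))]
    have ha : 0 < a := hk a (by simp)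
    simp [List.sum_append]
    omega

lemma Hw_congr (w : List Bool) (t t' : ℕ → ℝ) (h : ∀ i < w.length, t i = t' i) :
    Hw w t = Hw w t' := by
  refine Finset.prod_congr rfl fun i hi => ?_
  rw [Finset.mem_range] at hi
  rw [h i hi]

lemma Hw_append (u v : List Bool) (t : ℕ → ℝ) :
    Hw (u ++ v) t = Hw u t * Hw v (fun i => t (u.length + i)) := by
  unfold Hw
  rw [List.length_append, Finset.prod_range_add]
  congr 1
  · refine Finset.prod_congr rfl fun i hi => ?_
    rw [Finset.mem_range] at hi
    rw [List.getD_append _ _ _ _ hi]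
  · refine Finset.prod_congr rfl fun i hi => ?_
    rw [List.getD_append_right _ _ _ _ (by omega)]
    congr 2
    omega

lemma Hw_block (m : ℕ) (t : ℕ → ℝ) :
    Hw (true :: List.replicate m false) t
      = (1 / (1 - t 0)) * ∏ i ∈ Finset.range m, 1 / t (i + 1) := by
  unfold Hw
  have h0 : h ((true :: List.replicate m false).getD 0 true) (t 0) = 1 / (1 - t 0) := by
    simp [h, List.getD]
  have hs : ∀ i ∈ Finset.range m,
      h ((true :: List.replicate m false).getD (i + 1) true) (t (i + 1)) = 1 / t (i + 1) := by
    intro i hi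
    rw [Finset.mem_range] at hi
    simp [h, List.getD, List.getElem?_replicate, hi]
  rw [show (true :: List.replicate m false).length = m + 1 by simp,
    Finset.prod_range_succ', Finset.prod_congr rfl hs, h0, mul_comm]

lemma key : ∀ (k : List ℕ), (∀ a ∈ k, 0 < a) → ∀ x : ℕ → ℝ,
    (∀ j, j < k.sum → x j ∈ Set.Ioo (0 : ℝ) 1) →
    Hw (word k) (fun i => ∏ j ∈ Finset.range (k.sum - i), x j)
      * ∏ s ∈ Finset.range k.sum, ∏ j ∈ Finset.range s, x j = fk k x := by
  intro k
  induction k using List.reverseRecOn with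
  | nil => intro _ x _; simp [word, Hw, fk]
  | append_singleton k' a ih =>
    intro hk x hx
    have ha : 0 < a := hk a (by simp)
    have hk' : ∀ b ∈ k', 0 < b := fun b hb => hk b (by simp [hb])
    set K : ℕ := k'.sum with hK
    have hsum : (k' ++ [a]).sum = K + a := by simp [hK]
    rw [hsum] at hx ⊢
    set P : ℕ → ℝ := fun s => ∏ j ∈ Finset.range s, x j with hP
    have hPpos : ∀ s ≤ K + a, 0 < P s := by
      intro s hs
      exact Finset.prod_pos fun j hj => (hx j (by rw [Finset.mem_range] at hj; omega)).1
    have hPne : ∀ s ≤ K + a, P s ≠ 0 := fun s hs => ne_of_gt (hPpos s hs)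
    have hPlt : P (K + a) < 1 := by
      have := Finset.prod_lt_prod_of_nonempty
        (f := x) (g := fun _ => (1 : ℝ))
        (fun j hj => (hx j (Finset.mem_range.mp hj)).1)
        (fun j hj => (hx j (Finset.mem_range.mp hj)).2)
        (Finset.nonempty_range_iff.mpr (by omega))
      simpa using this
    have h1P : (1 : ℝ) - P (K + a) ≠ 0 := by
      have := hPpos (K + a) le_rfl
      intro hcon
      nlinarith
    -- fk splits
    have hfk : fk (k' ++ [a]) x = fk k' x * (P K / (1 - P (K + a))) := by
      unfold fk
      rw [List.length_append, List.length_singleton, Finset.prod_range_succ]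
      have h1 : ∀ m ≤ k'.length, (k' ++ [a]).take m = k'.take m := by
        intro m hm
        rw [List.take_append, Nat.sub_eq_zero_of_le hm]
        simp
      congr 1
      · refine Finset.prod_congr rfl fun i hi => ?_
        rw [Finset.mem_range] at hi
        rw [h1 i (by omega), h1 (i + 1) (by omega)]
      · have h2 : (k' ++ [a]).take k'.length = k' := List.take_left
        have h3 : (k' ++ [a]).take (k'.length + 1) = k' ++ [a] := by
          apply List.take_of_length_le; simp
        rw [h2, h3, hsum]
    -- word splits
    rw [word_append, Hw_append]
    have hblklen : (true :: List.replicate (a - 1) false).length = a := by simp; omega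
    rw [hblklen, Hw_block]
    -- shifted tail
    have hshift : Hw (word k') (fun i => P (K + a - (a + i))) = Hw (word k') (fun i => P (K - i)) :=
      Hw_congr _ _ _ (fun i _ => by congr 1; omega)
    rw [hshift]
    have hih := ih hk' x (fun j hj => hx j (by omega))
    -- the product identity C
    have hC : (∏ i ∈ Finset.range (a - 1), 1 / P (K + a - (i + 1)))
        * ∏ s ∈ Finset.range (K + a), P s
        = (∏ s ∈ Finset.range K, P s) * P K := by
      have hsplit : ∏ s ∈ Finset.range (K + a), P s
          = (∏ s ∈ Finset.range (K + 1), P s) * ∏ s ∈ Finset.Ico (K + 1) (K + a), P s :=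
        (Finset.prod_range_mul_prod_Ico _ (by omega)).symm
      have hIco : ∏ s ∈ Finset.Ico (K + 1) (K + a), P s
          = ∏ i ∈ Finset.range (a - 1), P (K + 1 + i) := by
        rw [Finset.prod_Ico_eq_prod_range]
        have harg : K + a - (K + 1) = a - 1 := by omega
        rw [harg]
      have hrefl : ∏ i ∈ Finset.range (a - 1), P (K + 1 + i)
          = ∏ i ∈ Finset.range (a - 1), P (K + a - (i + 1)) := by
        rw [← Finset.prod_range_reflect]
        refine Finset.prod_congr rfl fun i hi => ?_
        rw [Finset.mem_range] at hi
        congr 1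
        omega
      have hone : (∏ i ∈ Finset.range (a - 1), 1 / P (K + a - (i + 1)))
          * ∏ i ∈ Finset.range (a - 1), P (K + a - (i + 1)) = 1 := by
        rw [← Finset.prod_mul_distrib]
        refine Finset.prod_eq_one fun i hi => ?_
        rw [Finset.mem_range] at hi
        exact one_div_mul_cancel (hPne _ (by omega))
      rw [hsplit, hIco, hrefl, Finset.prod_range_succ]
      calc (∏ i ∈ Finset.range (a - 1), 1 / P (K + a - (i + 1)))
            * ((∏ s ∈ Finset.range K, P s) * P K
              * ∏ i ∈ Finset.range (a - 1), P (K + a - (i + 1)))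
          = ((∏ i ∈ Finset.range (a - 1), 1 / P (K + a - (i + 1)))
              * ∏ i ∈ Finset.range (a - 1), P (K + a - (i + 1)))
            * ((∏ s ∈ Finset.range K, P s) * P K) := by ring
        _ = (∏ s ∈ Finset.range K, P s) * P K := by rw [hone, one_mul]
    rw [hfk]
    have ht0 : K + a - 0 = K + a := rfl
    rw [ht0]
    linear_combination ((1 / (1 - P (K + a))) * Hw (word k') (fun i => P (K - i))) * hC
      + (P K / (1 - P (K + a))) * hih

open ContinuousLinearMap in
lemma jacobian (n : ℕ) (x : Fin n → ℝ) (hx : ∀ i, x i ∈ Set.Ioo (0 : ℝ) 1) :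
    HasFDerivAt (phi n)
      (ContinuousLinearMap.pi (fun i : Fin n =>
        ∑ j ∈ Finset.univ.filter (fun j : Fin n => (j : ℕ) < n - (i : ℕ)),
          (∏ l ∈ (Finset.univ.filter (fun l : Fin n => (l : ℕ) < n - (i : ℕ))).erase j, x l)
            • (ContinuousLinearMap.proj j : (Fin n → ℝ) →L[ℝ] ℝ))) x ∧
    |ContinuousLinearMap.det (ContinuousLinearMap.pi (fun i : Fin n =>
        ∑ j ∈ Finset.univ.filter (fun j : Fin n => (j : ℕ) < n - (i : ℕ)),
          (∏ l ∈ (Finset.univ.filter (fun l : Fin n => (l : ℕ) < n - (i : ℕ))).erase j, x l)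
            • (ContinuousLinearMap.proj j : (Fin n → ℝ) →L[ℝ] ℝ)))|
      = ∏ j ∈ Finset.range (n - 1), extFin x j ^ (n - 1 - j) := by
  constructor
  · rw [show phi n = fun x (i : Fin n) =>
        ∏ j ∈ Finset.univ.filter (fun j : Fin n => (j : ℕ) < n - (i : ℕ)), x j from ?_]
    · exact hasFDerivAt_pi.mpr fun i =>
        HasFDerivAt.finset_prod (fun j _ => hasFDerivAt_apply j x)
    · funext y i
      rw [phi, filter_prod_eq y (Nat.sub_le n i)]
  · set c : Fin n → Fin n → ℝ := fun i j =>
      ∏ l ∈ (Finset.univ.filter (fun l : Fin n => (l : ℕ) < n - (i : ℕ))).erase j, x l with hc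
    set L := ContinuousLinearMap.pi (fun i : Fin n =>
        ∑ j ∈ Finset.univ.filter (fun j : Fin n => (j : ℕ) < n - (i : ℕ)),
          (c i j) • (ContinuousLinearMap.proj j : (Fin n → ℝ) →L[ℝ] ℝ)) with hL
    set M : Matrix (Fin n) (Fin n) ℝ :=
      Matrix.of (fun i j : Fin n => if (j : ℕ) < n - (i : ℕ) then c i j else 0) with hMdef
    have hM : LinearMap.toMatrix' (↑L : (Fin n → ℝ) →ₗ[ℝ] Fin n → ℝ) = M := by
      ext i j
      rw [LinearMap.toMatrix'_apply]
      simp only [hL, ContinuousLinearMap.coe_coe, ContinuousLinearMap.pi_apply,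
        ContinuousLinearMap.coe_sum', Finset.sum_apply, ContinuousLinearMap.coe_smul',
        Pi.smul_apply, ContinuousLinearMap.proj_apply, smul_eq_mul, Pi.single_apply, mul_ite, mul_one, mul_zero]
      rw [Finset.sum_ite_eq' (Finset.univ.filter (fun j : Fin n => (j : ℕ) < n - (i : ℕ))) j
        (fun j' => c i j')]
      simp [hMdef]
    have hdet : ContinuousLinearMap.det L = M.det := by
      rw [← hM, LinearMap.det_toMatrix']
    set N := M.submatrix Fin.revPerm id with hN
    have hperm := Matrix.det_permute (Fin.revPerm : Equiv.Perm (Fin n)) M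
    have habs : |M.det| = |N.det| := by
      rw [hN]
      rcases Int.units_eq_one_or (Equiv.Perm.sign (Fin.revPerm : Equiv.Perm (Fin n))) with hs | hs <;>
        rw [hperm, hs] <;> simp
    have hNtri : N.BlockTriangular OrderDual.toDual := by
      intro i j hij
      have hij' : (i : ℕ) < (j : ℕ) := hij
      show (if ((j : ℕ) < n - ((Fin.rev i : Fin n) : ℕ)) then _ else 0) = 0
      rw [if_neg]
      have := i.isLt
      rw [Fin.val_rev]
      omega
    have hdiag : ∀ i : Fin n, N i i = ∏ j ∈ Finset.range (i : ℕ), extFin x j := by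
      intro i
      have hi := i.isLt
      have h1 : N i i = if ((i : ℕ) < n - ((Fin.rev i : Fin n) : ℕ)) then c (Fin.rev i) i else 0 := rfl
      rw [h1, if_pos (by rw [Fin.val_rev]; omega)]
      have hset : (Finset.univ.filter
            (fun l : Fin n => (l : ℕ) < n - ((Fin.rev i : Fin n) : ℕ))).erase i
          = Finset.univ.filter (fun l : Fin n => (l : ℕ) < (i : ℕ)) := by
        ext l
        simp only [Finset.mem_erase, Finset.mem_filter, Finset.mem_univ, true_and,
          Fin.val_rev, ne_eq, Fin.ext_iff]
        have := l.isLt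
        omega
      rw [hc]
      show (∏ l ∈ (Finset.univ.filter
          (fun l : Fin n => (l : ℕ) < n - ((Fin.rev i : Fin n) : ℕ))).erase i, x l) = _
      rw [hset, filter_prod_eq x (le_of_lt hi)]
    have hNdet : N.det = ∏ j ∈ Finset.range (n - 1), extFin x j ^ (n - 1 - j) := by
      rw [Matrix.det_of_lowerTriangular N hNtri, Finset.prod_congr rfl (fun i _ => hdiag i),
        Fin.prod_univ_eq_prod_range (fun s => ∏ j ∈ Finset.range s, extFin x j) n,
        prodP_eq_pow]
    rw [hdet, habs, hNdet, abs_of_pos]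
    refine Finset.prod_pos fun j hj => ?_
    rw [Finset.mem_range] at hj
    have hjn : j < n := by omega
    rw [extFin_lt x hjn]
    exact pow_pos (hx ⟨j, hjn⟩).1 _

lemma cube_ext {n : ℕ} {x : Fin n → ℝ} (hx : x ∈ cube n) :
    ∀ j < n, extFin x j ∈ Set.Ioo (0 : ℝ) 1 := fun j hj => by
  rw [extFin_lt x hj]; exact hx _

/-- The inverse map. -/
noncomputable def psi (n : ℕ) (t : Fin n → ℝ) : Fin n → ℝ :=
  fun j => if (j : ℕ) = 0 then extFin t (n - 1)
    else extFin t (n - 1 - (j : ℕ)) / extFin t (n - (j : ℕ))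

lemma phi_bijOn (n : ℕ) (hn : 1 ≤ n) : Set.BijOn (phi n) (cube n) (simplex n) := by
  have hmaps : Set.MapsTo (phi n) (cube n) (simplex n) := by
    intro x hx
    have hIoo : ∀ c : ℕ, 1 ≤ c → c ≤ n →
        (∏ j ∈ Finset.range c, extFin x j) ∈ Set.Ioo (0 : ℝ) 1 := by
      intro c h1 h2
      constructor
      · exact Finset.prod_pos fun j hj =>
          (cube_ext hx j (by rw [Finset.mem_range] at hj; omega)).1
      · have := Finset.prod_lt_prod_of_nonempty
          (s := Finset.range c) (f := fun j => extFin x j) (g := fun _ => (1 : ℝ))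
          (fun j hj => (cube_ext hx j (by rw [Finset.mem_range] at hj; omega)).1)
          (fun j hj => (cube_ext hx j (by rw [Finset.mem_range] at hj; omega)).2)
          (Finset.nonempty_range_iff.mpr (by omega))
        simpa using this
    constructor
    · intro i i' hii'
      have hi' := i'.isLt
      have hlt : n - (i' : ℕ) < n - (i : ℕ) := by
        have : (i : ℕ) < (i' : ℕ) := hii'
        omega
      have hsplit : phi n x i
          = phi n x i' * ∏ j ∈ Finset.Ico (n - (i' : ℕ)) (n - (i : ℕ)), extFin x j := by
        rw [phi, phi, Finset.prod_range_mul_prod_Ico _ (le_of_lt hlt)]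
      rw [hsplit]
      have hpos : 0 < phi n x i' := (hIoo _ (by omega) (by omega)).1
      have hq : (∏ j ∈ Finset.Ico (n - (i' : ℕ)) (n - (i : ℕ)), extFin x j) < 1 := by
        have := Finset.prod_lt_prod_of_nonempty
          (s := Finset.Ico (n - (i' : ℕ)) (n - (i : ℕ))) (f := fun j => extFin x j)
          (g := fun _ => (1 : ℝ))
          (fun j hj => (cube_ext hx j (by rw [Finset.mem_Ico] at hj; omega)).1)
          (fun j hj => (cube_ext hx j (by rw [Finset.mem_Ico] at hj; omega)).2)
          (by rw [Finset.nonempty_Ico]; omega)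
        simpa using this
      have hqpos : 0 < ∏ j ∈ Finset.Ico (n - (i' : ℕ)) (n - (i : ℕ)), extFin x j :=
        Finset.prod_pos fun j hj =>
          (cube_ext hx j (by rw [Finset.mem_Ico] at hj; omega)).1
      nlinarith
    · intro i
      have := i.isLt
      exact hIoo (n - (i : ℕ)) (by omega) (by omega)
  have hmaps' : Set.MapsTo (psi n) (simplex n) (cube n) := by
    intro t ht j
    rcases ht with ⟨hmono, hIoo⟩
    by_cases hj : (j : ℕ) = 0
    · have h1 : n - 1 < n := by omega
      simp only [psi, hj, if_pos]
      rw [extFin_lt t h1]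
      exact hIoo _
    · have hjlt := j.isLt
      have h1 : n - 1 - (j : ℕ) < n := by omega
      have h2 : n - (j : ℕ) < n := by omega
      simp only [psi, hj, if_neg, if_false]
      rw [extFin_lt t h1, extFin_lt t h2]
      have hlt : t ⟨n - 1 - (j : ℕ), h1⟩ < t ⟨n - (j : ℕ), h2⟩ := by
        apply hmono
        show n - 1 - (j : ℕ) < n - (j : ℕ)
        omega
      have hp1 : 0 < t ⟨n - 1 - (j : ℕ), h1⟩ := (hIoo _).1
      have hp2 : 0 < t ⟨n - (j : ℕ), h2⟩ := (hIoo _).1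
      exact ⟨div_pos hp1 hp2, (div_lt_one hp2).mpr hlt⟩
  have hleft : Set.LeftInvOn (psi n) (phi n) (cube n) := by
    intro x hx
    funext j
    have hjlt := j.isLt
    have hphiext : ∀ m : ℕ, m < n →
        extFin (phi n x) m = ∏ l ∈ Finset.range (n - m), extFin x l := by
      intro m hm
      rw [extFin_lt _ hm]
      rfl
    by_cases hj : (j : ℕ) = 0
    · simp only [psi, hj, if_pos]
      rw [hphiext (n - 1) (by omega)]
      have : n - (n - 1) = 1 := by omega
      rw [this, Finset.prod_range_one, extFin_lt x (by omega : 0 < n)]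
      congr 1
      exact (Fin.ext hj.symm : (⟨0, by omega⟩ : Fin n) = j) ▸ rfl
    · simp only [psi, hj, if_neg, if_false]
      rw [hphiext (n - 1 - (j : ℕ)) (by omega), hphiext (n - (j : ℕ)) (by omega)]
      have e1 : n - (n - 1 - (j : ℕ)) = (j : ℕ) + 1 := by omega
      have e2 : n - (n - (j : ℕ)) = (j : ℕ) := by omega
      rw [e1, e2, Finset.prod_range_succ]
      have hne : (∏ l ∈ Finset.range (j : ℕ), extFin x l) ≠ 0 :=
        ne_of_gt (Finset.prod_pos fun l hl =>
          (cube_ext hx l (by rw [Finset.mem_range] at hl; omega)).1)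
      rw [mul_comm, mul_div_assoc, div_self hne, mul_one, extFin_lt x hjlt]
  have hright : Set.RightInvOn (psi n) (phi n) (simplex n) := by
    intro t ht
    rcases ht with ⟨hmono, hIoo⟩
    have hext : ∀ m : ℕ, (hm : m < n) → extFin t m = t ⟨m, hm⟩ := fun m hm => extFin_lt t hm
    have htpos : ∀ m : ℕ, (hm : m < n) → 0 < extFin t m := by
      intro m hm; rw [hext m hm]; exact (hIoo _).1
    have tel : ∀ m : ℕ, m < n →
        ∏ l ∈ Finset.range (m + 1), extFin (psi n t) l = extFin t (n - 1 - m) := by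
      intro m
      induction m with
      | zero =>
        intro _
        rw [Finset.prod_range_one, extFin_lt _ (by omega : 0 < n)]
        simp [psi]
      | succ m ihm =>
        intro hm
        rw [Finset.prod_range_succ, ihm (by omega), extFin_lt _ (by omega : m + 1 < n)]
        have hne0 : ((⟨m + 1, by omega⟩ : Fin n) : ℕ) ≠ 0 := by simp
        simp only [psi, hne0, if_neg, if_false]
        have e3 : n - ((⟨m + 1, by omega⟩ : Fin n) : ℕ) = n - 1 - m := by simp; omega
        have e4 : n - 1 - ((⟨m + 1, by omega⟩ : Fin n) : ℕ) = n - 1 - (m + 1) := by simp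
        rw [e3, e4]
        rw [mul_div_assoc']
        rw [mul_comm, mul_div_assoc, div_self (ne_of_gt (htpos _ (by omega))), mul_one]
    funext i
    have hi := i.isLt
    show ∏ l ∈ Finset.range (n - (i : ℕ)), extFin (psi n t) l = t i
    have e5 : n - (i : ℕ) = (n - (i : ℕ) - 1) + 1 := by omega
    rw [e5, tel (n - (i : ℕ) - 1) (by omega)]
    have e6 : n - 1 - (n - (i : ℕ) - 1) = (i : ℕ) := by omega
    rw [e6, extFin_lt t hi]
  exact Set.InvOn.bijOn ⟨hleft, hright⟩ hmaps hmaps'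

/-- **Simplicial-to-cubical change of variables**: for `n ≥ 1` the map
`φ(x₁,…,x_n) = (t₁,…,t_n)`, `t_i = x₁⋯x_{n−i+1}`, is a bijection from the open cube
`(0,1)^n` onto the open simplex `Δ_n`; it is differentiable on the cube with Jacobian
determinant of absolute value `∏_{j=1}^{n−1} x_j^{n−j} ≠ 0`; and for every tuple `k`
of positive integers with `k₁ ≥ 2` and sum `n`, the pullback identity
`H_{w(k)}(φ(x)) · ∏_{j=1}^{n−1} x_j^{n−j} = f_k(x)` holds on the cube. -/
theorem simplicial_to_cubical (n : ℕ) (hn : 1 ≤ n) :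
    Set.BijOn (phi n) (cube n) (simplex n) ∧
    (∀ x ∈ cube n, DifferentiableAt ℝ (phi n) x ∧
      |ContinuousLinearMap.det (fderiv ℝ (phi n) x)|
        = ∏ j ∈ Finset.range (n - 1), extFin x j ^ (n - 1 - j) ∧
      (∏ j ∈ Finset.range (n - 1), extFin x j ^ (n - 1 - j)) ≠ 0) ∧
    ∀ k : List ℕ, (∀ a ∈ k, 0 < a) → 2 ≤ k.headI → k.sum = n →
      ∀ x ∈ cube n,
        Hw (word k) (extFin (phi n x)) * ∏ j ∈ Finset.range (n - 1), extFin x j ^ (n - 1 - j)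
          = fk k (extFin x) := by
  have hprodpos : ∀ x ∈ cube n,
      0 < ∏ j ∈ Finset.range (n - 1), extFin x j ^ (n - 1 - j) := by
    intro x hx
    refine Finset.prod_pos fun j hj => ?_
    rw [Finset.mem_range] at hj
    exact pow_pos (cube_ext hx j (by omega)).1 _
  refine ⟨phi_bijOn n hn, fun x hx => ?_, fun k hk hk1 hks x hx => ?_⟩
  · obtain ⟨hd, hdet⟩ := jacobian n x hx
    exact ⟨hd.differentiableAt, by rw [hd.fderiv]; exact hdet, ne_of_gt (hprodpos x hx)⟩
  · have hkey := key k hk (extFin x) (fun j hj => cube_ext hx j (by omega))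
    rw [hks] at hkey
    have hlen : (word k).length = n := by rw [word_length k hk, hks]
    have hHw : Hw (word k) (extFin (phi n x))
        = Hw (word k) (fun i => ∏ j ∈ Finset.range (n - i), extFin x j) := by
      refine Hw_congr _ _ _ fun i hi => ?_
      rw [hlen] at hi
      rw [extFin_lt _ hi]
      rfl
    rw [hHw, ← prodP_eq_pow (extFin x) n, ← hkey]
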